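/- For every integer n ≥ 1, the partition function satisfies p(n) ≤ exp(π√(2n/3)). -/

import Mathlib

open Finset Real

namespace PartitionUB

variable {n : ℕ}

/-- The multiplicity vector of a partition. -/
def mult (lam : Nat.Partition n) (i : Fin n) : ℕ := lam.parts.count (i.1 + 1)

lemma part_le (lam : Nat.Partition n) {a : ℕ} (ha : a ∈ lam.parts) : a ≤ n := by
  calc a ≤ lam.parts.sum :=
        Multiset.single_le_sum (fun x _ => Nat.zero_le x) a ha
    _ = n := lam.parts_sum

lemma card_parts_le (lam : Nat.Partition n) : Multiset.card lam.parts ≤ n := by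
  have h1 : Multiset.card lam.parts = (lam.parts.map (fun _ => 1)).sum := by
    rw [Multiset.map_const', Multiset.sum_replicate, smul_eq_mul, mul_one]
  have h2 : (lam.parts.map (fun _ => 1)).sum ≤ (lam.parts.map id).sum := by
    apply Multiset.sum_map_le_sum_map
    intro i hi
    exact lam.parts_pos hi
  calc Multiset.card lam.parts = (lam.parts.map fun _ => 1).sum := h1
    _ ≤ (lam.parts.map id).sum := h2
    _ = n := by rw [Multiset.map_id, lam.parts_sum]

lemma mult_le (lam : Nat.Partition n) (i : Fin n) : mult lam i ≤ n :=
  (Multiset.count_le_card _ _).trans (card_parts_le lam)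

lemma sum_mult (lam : Nat.Partition n) :
    ∑ i : Fin n, (i.1 + 1) * mult lam i = n := by
  have h1 : ∑ i : Fin n, (i.1 + 1) * mult lam i
      = ∑ k ∈ Finset.range n, (k + 1) * lam.parts.count (k + 1) := by
    simp only [mult]
    exact Fin.sum_univ_eq_sum_range (fun k => (k + 1) * lam.parts.count (k + 1)) n
  have h2 : ∑ k ∈ Finset.range (n + 1), k * lam.parts.count k
      = ∑ k ∈ Finset.range n, (k + 1) * lam.parts.count (k + 1) := by
    rw [Finset.sum_range_succ']
    simp
  have hsub : lam.parts.toFinset ⊆ Finset.range (n + 1) := by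
    intro a ha
    rw [Multiset.mem_toFinset] at ha
    exact Finset.mem_range.2 (Nat.lt_succ_of_le (part_le lam ha))
  have h3 : ∑ k ∈ Finset.range (n + 1), k * lam.parts.count k
      = ∑ k ∈ lam.parts.toFinset, k * lam.parts.count k := by
    refine (Finset.sum_subset hsub ?_).symm
    intro a _ ha
    rw [Multiset.mem_toFinset] at ha
    rw [Multiset.count_eq_zero_of_notMem ha, mul_zero]
  have h4 : lam.parts.sum = ∑ k ∈ lam.parts.toFinset, k * lam.parts.count k := by
    conv_lhs => rw [← Multiset.map_id lam.parts]
    rw [Finset.sum_multiset_map_count]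
    exact Finset.sum_congr rfl fun a _ => by rw [smul_eq_mul, id, mul_comm]
  rw [h1, ← h2, h3, ← h4, lam.parts_sum]

lemma mult_injective : Function.Injective (fun lam : Nat.Partition n => mult lam) := by
  intro lam mu h
  ext a
  rcases Nat.eq_zero_or_pos a with rfl | ha
  · rw [Multiset.count_eq_zero_of_notMem, Multiset.count_eq_zero_of_notMem]
    · exact fun hc => lt_irrefl 0 (mu.parts_pos hc)
    · exact fun hc => lt_irrefl 0 (lam.parts_pos hc)
  · rcases le_or_gt a n with han | han
    · have hi : a - 1 < n := by omega
      have := congr_fun h ⟨a - 1, hi⟩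
      simpa [mult, Nat.sub_add_cancel ha] using this
    · rw [Multiset.count_eq_zero_of_notMem, Multiset.count_eq_zero_of_notMem]
      · exact fun hc => absurd (part_le mu hc) (by omega)
      · exact fun hc => absurd (part_le lam hc) (by omega)

lemma geom_le {y : ℝ} (hy0 : 0 ≤ y) (hy1 : y < 1) (N : ℕ) :
    ∑ j ∈ Finset.range N, y ^ j ≤ (1 - y)⁻¹ := by
  have hne : y ≠ 1 := ne_of_lt hy1
  have hyN : 0 ≤ y ^ N := pow_nonneg hy0 N
  rw [geom_sum_eq hne]
  have h1 : (y ^ N - 1) / (y - 1) = (1 - y ^ N) / (1 - y) := by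
    rw [div_eq_div_iff (by linarith) (by linarith)]
    ring
  rw [h1, inv_eq_one_div]
  gcongr
  · linarith

/-- Key combinatorial inequality. -/
lemma key1 {x : ℝ} (hx0 : 0 ≤ x) (hx1 : x < 1) :
    (Nat.card (Nat.Partition n) : ℝ) * x ^ n ≤ ∏ i : Fin n, (1 - x ^ (i.1 + 1))⁻¹ := by
  classical
  have hterm : ∀ lam : Nat.Partition n,
      (x : ℝ) ^ n = ∏ i : Fin n, (x ^ (i.1 + 1)) ^ (mult lam i) := by
    intro lam
    calc x ^ n = x ^ (∑ i : Fin n, (i.1 + 1) * mult lam i) := by rw [sum_mult]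
      _ = ∏ i : Fin n, (x ^ (i.1 + 1)) ^ (mult lam i) := by
          rw [← Finset.prod_pow_eq_pow_sum]
          exact Finset.prod_congr rfl fun i _ => by rw [← pow_mul]
  have hsum : (Nat.card (Nat.Partition n) : ℝ) * x ^ n
      = ∑ lam : Nat.Partition n, ∏ i : Fin n, (x ^ (i.1 + 1)) ^ (mult lam i) := by
    rw [Nat.card_eq_fintype_card, ← Finset.card_univ]
    rw [Finset.sum_congr rfl fun lam _ => (hterm lam).symm]
    rw [Finset.sum_const, nsmul_eq_mul]
  rw [hsum]
  have hstep : ∑ lam : Nat.Partition n, ∏ i : Fin n, (x ^ (i.1 + 1)) ^ (mult lam i)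
      ≤ ∑ f ∈ Fintype.piFinset (fun _ : Fin n => Finset.range (n + 1)),
          ∏ i : Fin n, (x ^ (i.1 + 1)) ^ (f i) := by
    have himg : ∑ lam : Nat.Partition n, ∏ i : Fin n, (x ^ (i.1 + 1)) ^ (mult lam i)
        = ∑ f ∈ Finset.univ.image (fun lam : Nat.Partition n => mult lam),
            ∏ i : Fin n, (x ^ (i.1 + 1)) ^ (f i) := by
      rw [Finset.sum_image (fun a _ b _ h => mult_injective h)]
    rw [himg]
    apply Finset.sum_le_sum_of_subset_of_nonneg
    · intro f hf
      rw [Finset.mem_image] at hf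
      obtain ⟨lam, _, rfl⟩ := hf
      rw [Fintype.mem_piFinset]
      exact fun i => Finset.mem_range.2 (Nat.lt_succ_of_le (mult_le lam i))
    · intro f _ _
      exact Finset.prod_nonneg fun i _ => pow_nonneg (pow_nonneg hx0 _) _
  refine hstep.trans ?_
  rw [← Finset.prod_univ_sum]
  apply Finset.prod_le_prod
  · intro i _
    exact Finset.sum_nonneg fun j _ => pow_nonneg (pow_nonneg hx0 _) _
  · intro i _
    exact geom_le (pow_nonneg hx0 _) (pow_lt_one₀ hx0 hx1 (Nat.succ_ne_zero _)) _

lemma one_sub_pow_ge {x : ℝ} (hx0 : 0 ≤ x) (hx1 : x ≤ 1) (j : ℕ) :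
    ((j : ℝ) + 1) * x ^ j * (1 - x) ≤ 1 - x ^ (j + 1) := by
  have hsum : ((j : ℝ) + 1) * x ^ j ≤ ∑ t ∈ Finset.range (j + 1), x ^ t := by
    have hle : ∀ t ∈ Finset.range (j + 1), x ^ j ≤ x ^ t := fun t ht =>
      pow_le_pow_of_le_one hx0 hx1 (Nat.lt_succ_iff.1 (Finset.mem_range.1 ht))
    calc ((j : ℝ) + 1) * x ^ j = (Finset.range (j + 1)).card • x ^ j := by
          rw [Finset.card_range, nsmul_eq_mul]; push_cast; ring
      _ ≤ ∑ t ∈ Finset.range (j + 1), x ^ t := Finset.card_nsmul_le_sum _ _ _ hle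
  have hgm := geom_sum_mul x (j + 1)
  have h1x : (0 : ℝ) ≤ 1 - x := by linarith
  have := mul_le_mul_of_nonneg_left hsum h1x
  nlinarith [this, hgm]

lemma key2 {x : ℝ} (hx0 : 0 < x) (hx1 : x < 1) :
    ∑ i : Fin n, -Real.log (1 - x ^ (i.1 + 1)) ≤ π ^ 2 / 6 * (x / (1 - x)) := by
  have h1x : (0 : ℝ) < 1 - x := by linarith
  have hxk : ∀ k : ℕ, |x ^ (k + 1)| < 1 := fun k => by
    rw [abs_of_nonneg (pow_nonneg hx0.le _)]
    exact pow_lt_one₀ hx0.le hx1 (Nat.succ_ne_zero k)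
  have hlog : ∀ i : Fin n, HasSum (fun j : ℕ => (x ^ (i.1 + 1)) ^ (j + 1) / ((j : ℝ) + 1))
      (-Real.log (1 - x ^ (i.1 + 1))) := fun i => by
    have := hasSum_pow_div_log_of_abs_lt_one (hxk i.1)
    convert this using 2
  have hswap : ∑ i : Fin n, -Real.log (1 - x ^ (i.1 + 1))
      = ∑' j : ℕ, ∑ i : Fin n, (x ^ (i.1 + 1)) ^ (j + 1) / ((j : ℝ) + 1) := by
    calc ∑ i : Fin n, -Real.log (1 - x ^ (i.1 + 1))
        = ∑ i : Fin n, ∑' j : ℕ, (x ^ (i.1 + 1)) ^ (j + 1) / ((j : ℝ) + 1) :=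
          Finset.sum_congr rfl fun i _ => ((hlog i).tsum_eq).symm
      _ = ∑' j : ℕ, ∑ i : Fin n, (x ^ (i.1 + 1)) ^ (j + 1) / ((j : ℝ) + 1) :=
          (Summable.tsum_finsetSum fun i _ => (hlog i).summable).symm
  have hbound : ∀ j : ℕ, ∑ i : Fin n, (x ^ (i.1 + 1)) ^ (j + 1) / ((j : ℝ) + 1)
      ≤ x / (1 - x) * (1 / ((j : ℝ) + 1) ^ 2) := by
    intro j
    have hj : (0 : ℝ) < (j : ℝ) + 1 := by positivity
    set y := x ^ (j + 1) with hy
    have hy0 : 0 ≤ y := pow_nonneg hx0.le _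
    have hy1 : y < 1 := pow_lt_one₀ hx0.le hx1 (Nat.succ_ne_zero j)
    have h1y : (0 : ℝ) < 1 - y := by linarith
    have hgeom : ∑ i : Fin n, (x ^ (i.1 + 1)) ^ (j + 1) = ∑ i : Fin n, y ^ (i.1 + 1) :=
      Finset.sum_congr rfl fun i _ => by rw [hy, ← pow_mul, ← pow_mul, mul_comm]
    have hsum_y : ∑ i : Fin n, y ^ (i.1 + 1) ≤ y / (1 - y) := by
      have : ∑ i : Fin n, y ^ (i.1 + 1) = y * ∑ i ∈ Finset.range n, y ^ i := by
        rw [Finset.mul_sum, ← Fin.sum_univ_eq_sum_range (fun i => y * y ^ i) n]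
        exact Finset.sum_congr rfl fun i _ => by rw [pow_succ, mul_comm]
      rw [this, div_eq_mul_inv]
      exact mul_le_mul_of_nonneg_left (geom_le hy0 hy1 n) hy0
    have hdenom : ((j : ℝ) + 1) * x ^ j * (1 - x) ≤ 1 - y :=
      one_sub_pow_ge hx0.le hx1.le j
    have hdiv : y / (1 - y) ≤ x / (((j : ℝ) + 1) * (1 - x)) := by
      rw [div_le_div_iff₀ h1y (by positivity)]
      have hkey : y * (((j : ℝ) + 1) * (1 - x)) = x * (((j : ℝ) + 1) * x ^ j * (1 - x)) := by
        rw [hy, pow_succ]; ring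
      rw [hkey]
      exact mul_le_mul_of_nonneg_left hdenom hx0.le
    calc ∑ i : Fin n, (x ^ (i.1 + 1)) ^ (j + 1) / ((j : ℝ) + 1)
        = (∑ i : Fin n, y ^ (i.1 + 1)) / ((j : ℝ) + 1) := by
          rw [← hgeom, ← Finset.sum_div]
      _ ≤ (y / (1 - y)) / ((j : ℝ) + 1) := by gcongr
      _ ≤ (x / (((j : ℝ) + 1) * (1 - x))) / ((j : ℝ) + 1) := by gcongr
      _ = x / (1 - x) * (1 / ((j : ℝ) + 1) ^ 2) := by
          rw [div_div, div_mul_div_comm, mul_one]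
          congr 1
          ring
  have hzeta : HasSum (fun j : ℕ => (1 : ℝ) / ((j : ℝ) + 1) ^ 2) (π ^ 2 / 6) := by
    have h := hasSum_zeta_two
    have h2 := (hasSum_nat_add_iff (f := fun n : ℕ => (1 : ℝ) / (n : ℝ) ^ 2) 1).2
      (by simpa using h)
    convert h2 using 2 with j
    push_cast
    rfl
    push_cast
    ring
  have hc : Summable fun j : ℕ => x / (1 - x) * (1 / ((j : ℝ) + 1) ^ 2) :=
    hzeta.summable.mul_left _
  have hg : Summable fun j : ℕ => ∑ i : Fin n, (x ^ (i.1 + 1)) ^ (j + 1) / ((j : ℝ) + 1) :=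
    summable_sum fun i _ => (hlog i).summable
  rw [hswap]
  refine (Summable.tsum_le_tsum hbound hg hc).trans ?_
  rw [tsum_mul_left, hzeta.tsum_eq, mul_comm]

end PartitionUB

theorem partition_upper_bound (n : ℕ) (hn : 1 ≤ n) :
    (Nat.card (Nat.Partition n) : ℝ) ≤ Real.exp (Real.pi * Real.sqrt (2 * n / 3)) := by
  have hn' : (0 : ℝ) < n := by exact_mod_cast hn
  set s : ℝ := Real.sqrt (6 * n) with hs
  have hs0 : 0 < s := Real.sqrt_pos.2 (by positivity)
  have hs2 : s ^ 2 = 6 * n := Real.sq_sqrt (by positivity)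
  set u : ℝ := π / s with hu
  have hu0 : 0 < u := div_pos Real.pi_pos hs0
  set x : ℝ := 1 / (1 + u) with hx
  have hx0 : 0 < x := by positivity
  have hx1 : x < 1 := by
    rw [hx, div_lt_one (by linarith)]; linarith
  have h1x : (0 : ℝ) < 1 - x := by linarith
  have hkey1 := PartitionUB.key1 (n := n) hx0.le hx1
  have hkey2 := PartitionUB.key2 (n := n) hx0 hx1
  have hfac : ∀ i : Fin n, (0 : ℝ) < 1 - x ^ (i.1 + 1) := fun i => by
    have : x ^ (i.1 + 1) < 1 := pow_lt_one₀ hx0.le hx1 (Nat.succ_ne_zero _)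
    linarith
  have hprod : ∏ i : Fin n, (1 - x ^ (i.1 + 1))⁻¹
      = Real.exp (∑ i : Fin n, -Real.log (1 - x ^ (i.1 + 1))) := by
    rw [Real.exp_sum]
    exact Finset.prod_congr rfl fun i _ => by
      rw [Real.exp_neg, Real.exp_log (hfac i)]
  have hxu : x / (1 - x) = 1 / u := by
    rw [hx]; field_simp
    rw [add_sub_cancel_left, div_self hu0.ne']
  have hxn : 0 < x ^ n := pow_pos hx0 n
  have hE : (Nat.card (Nat.Partition n) : ℝ) * x ^ n ≤ Real.exp (π ^ 2 / 6 * (1 / u)) := by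
    refine hkey1.trans ?_
    rw [hprod, Real.exp_le_exp, ← hxu]
    exact hkey2
  have hux : ((1 + u) * x) ^ n = 1 := by
    rw [hx]
    rw [mul_one_div, div_self (by positivity : (1:ℝ)+u ≠ 0), one_pow]
  have h1 : (Nat.card (Nat.Partition n) : ℝ)
      ≤ Real.exp (π ^ 2 / 6 * (1 / u)) * (1 + u) ^ n := by
    rw [← mul_le_mul_iff_of_pos_right hxn]
    refine hE.trans (le_of_eq ?_)
    calc Real.exp (π ^ 2 / 6 * (1 / u))
        = Real.exp (π ^ 2 / 6 * (1 / u)) * ((1 + u) * x) ^ n := by rw [hux, mul_one]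
      _ = Real.exp (π ^ 2 / 6 * (1 / u)) * (1 + u) ^ n * x ^ n := by
          rw [mul_pow, mul_assoc]
  have h2 : (1 + u) ^ n ≤ Real.exp (n * u) := by
    have hexpu := Real.add_one_le_exp u
    calc (1 + u) ^ n ≤ (Real.exp u) ^ n :=
          pow_le_pow_left₀ (by linarith) (by linarith) n
      _ = Real.exp (n * u) := by rw [← Real.exp_nat_mul]
  have h3 : (Nat.card (Nat.Partition n) : ℝ)
      ≤ Real.exp (π ^ 2 / 6 * (1 / u) + n * u) := by
    rw [Real.exp_add]
    exact h1.trans (mul_le_mul_of_nonneg_left h2 (Real.exp_pos _).le)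
  have hsq : Real.sqrt (2 * n / 3) = s / 3 := by
    rw [show (2 * (n : ℝ) / 3) = (s / 3) ^ 2 by rw [div_pow, hs2]; ring]
    exact Real.sqrt_sq (by positivity)
  have hexp : π ^ 2 / 6 * (1 / u) + n * u = π * Real.sqrt (2 * n / 3) := by
    have hπ : π ≠ 0 := Real.pi_ne_zero
    have hsne : s ≠ 0 := hs0.ne'
    have hn6 : (n : ℝ) = s ^ 2 / 6 := by rw [hs2]; ring
    rw [hsq, hu, hn6]
    field_simp
    ring
  rw [← hexp]
  exact h3
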